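/- Condition (b) alone in the previous setting implies covariate shift with respect to σ(T): if P[A₁ ∩ G] = Q[A₁ ∩ G] and P[G] = Q[G] for all G ∈ σ(T), then P and Q admit a common σ(T)-measurable version of the conditional probability of A₁ given σ(T). -/

import Mathlib

open MeasureTheory Set

/-- `Ψ` is an `m`-measurable version of the conditional probability of `A` given `m` under `P`
(a measure on the ambient σ-algebra `mΩ`): for every `m`-measurable `H`,
`P (A ∩ H) = ∫_H Ψ dP`. -/
def IsCondVersion {Ω : Type*} [mΩ : MeasurableSpace Ω] (m : MeasurableSpace Ω)
    (P : @Measure Ω mΩ) (A : Set Ω) (Ψ : Ω → ℝ) : Prop :=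
  Measurable[m] Ψ ∧
  ∀ H : Set Ω, MeasurableSet[m] H → (P (A ∩ H)).toReal = ∫ ω in H, Ψ ω ∂P

/-- `P` and `Q` are related by covariate shift w.r.t. the sub-σ-algebra `m`: there is a common
`m`-measurable `[0,1]`-valued version `Ψ` of the conditional probability of `A` given `m`. -/
def CovShift {Ω : Type*} [mΩ : MeasurableSpace Ω] (m : MeasurableSpace Ω)
    (P Q : @Measure Ω mΩ) (A : Set Ω) : Prop :=
  ∃ Ψ : Ω → ℝ, (∀ ω, Ψ ω ∈ Set.Icc (0 : ℝ) 1) ∧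
    @IsCondVersion Ω mΩ m P A Ψ ∧ @IsCondVersion Ω mΩ m Q A Ψ

/-- Condition (b) alone implies covariate shift w.r.t. `σ(T)`: if `P[A₁ ∩ G] = Q[A₁ ∩ G]` and
`P[G] = Q[G]` for all `G ∈ σ(T)`, then `P` and `Q` admit a common `σ(T)`-measurable version
of the conditional probability of `A₁` given `σ(T)`. -/
theorem stmt15 {Ω : Type} [mΩ : MeasurableSpace Ω] {m : MeasurableSpace Ω} (hm : m ≤ mΩ)
    {ΩT : Type} [mT : MeasurableSpace ΩT] (T : Ω → ΩT) (hT : @Measurable Ω ΩT m mT T)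
    (A₁ : Set Ω) (hA₁ : MeasurableSet[mΩ] A₁)
    (P Q : @Measure Ω mΩ) (hP : @IsProbabilityMeasure Ω mΩ P)
    (hQ : @IsProbabilityMeasure Ω mΩ Q)
    (hb : ∀ Gs : Set Ω, MeasurableSet[mT.comap T] Gs →
      P (A₁ ∩ Gs) = Q (A₁ ∩ Gs) ∧ P Gs = Q Gs) :
    @CovShift Ω mΩ (mT.comap T) P Q A₁ := by
  haveI := hP
  haveI := hQ
  have hmc : mT.comap T ≤ mΩ := (hT.comap_le).trans hm
  clear hT hm m
  set f : Ω → ℝ := A₁.indicator (fun _ => (1:ℝ)) with hfdef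
  have hf_int : Integrable f P := (integrable_const (1:ℝ)).indicator hA₁
  set Ψ₀ : Ω → ℝ := P[f | mT.comap T] with hΨ₀def
  set Ψ : Ω → ℝ := fun ω => max 0 (min 1 (Ψ₀ ω)) with hΨdef
  have hΨ₀meas : Measurable[mT.comap T] Ψ₀ := stronglyMeasurable_condExp.measurable
  have hΨmeas : Measurable[mT.comap T] Ψ :=
    Measurable.max (@measurable_const ℝ Ω _ (mT.comap T) 0)
      (Measurable.min (@measurable_const ℝ Ω _ (mT.comap T) 1) hΨ₀meas)
  have hΨrange : ∀ ω, Ψ ω ∈ Set.Icc (0:ℝ) 1 := fun ω =>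
    ⟨le_max_left _ _, max_le zero_le_one (min_le_left _ _)⟩
  -- Ψ = Ψ₀ a.e. [P]
  have h0 : (0:Ω → ℝ) ≤ᵐ[P] Ψ₀ := condExp_nonneg (Filter.Eventually.of_forall fun ω =>
    Set.indicator_nonneg (fun _ _ => zero_le_one) ω)
  have h1 : Ψ₀ ≤ᵐ[P] (fun _ => (1:ℝ)) := by
    have h := condExp_mono (μ := P) (m := mT.comap T) hf_int (integrable_const (1:ℝ))
      (Filter.Eventually.of_forall fun ω =>
        Set.indicator_le_self' (fun _ _ => zero_le_one) ω)
    have hc : P[(fun _ => (1:ℝ)) | mT.comap T] = fun _ => (1:ℝ) := condExp_const hmc 1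
    rwa [hc] at h
  have hΨae : Ψ =ᵐ[P] Ψ₀ := by
    filter_upwards [h0, h1] with ω h0ω h1ω
    have h0ω' : (0:ℝ) ≤ Ψ₀ ω := h0ω
    simp only [hΨdef]
    rw [min_eq_right h1ω, max_eq_right h0ω']
  -- set integrals of Ψ under P
  have hPint : ∀ H : Set Ω, MeasurableSet[mT.comap T] H →
      (P (A₁ ∩ H)).toReal = ∫ ω in H, Ψ ω ∂P := by
    intro H hH
    have hHm : MeasurableSet[mΩ] H := hmc H hH
    have h1 : ∫ ω in H, Ψ ω ∂P = ∫ ω in H, Ψ₀ ω ∂P :=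
      integral_congr_ae (ae_restrict_of_ae hΨae)
    have h2 : ∫ ω in H, Ψ₀ ω ∂P = ∫ ω in H, f ω ∂P :=
      setIntegral_condExp hmc hf_int hH
    have h3 : ∫ ω in H, f ω ∂P = (P (A₁ ∩ H)).toReal := by
      rw [hfdef]
      rw [setIntegral_indicator hA₁, setIntegral_const, smul_eq_mul, mul_one, Set.inter_comm H A₁]
      rfl
    rw [h1, h2, h3]
  -- measures agree on the sub-σ-algebra
  have htrim : P.trim hmc = Q.trim hmc := by
    refine @Measure.ext Ω (mT.comap T) _ _ fun s hs => ?_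
    rw [trim_measurableSet_eq hmc hs, trim_measurableSet_eq hmc hs]
    exact (hb s hs).2
  have hQint : ∀ H : Set Ω, MeasurableSet[mT.comap T] H →
      ∫ ω in H, Ψ ω ∂Q = ∫ ω in H, Ψ ω ∂P := by
    intro H hH
    have hsm : StronglyMeasurable[mT.comap T] (H.indicator Ψ) :=
      (hΨmeas.stronglyMeasurable).indicator hH
    rw [← integral_indicator (hmc H hH), ← integral_indicator (hmc H hH),
      integral_trim hmc hsm, integral_trim hmc hsm, htrim]
  refine ⟨Ψ, hΨrange, ⟨hΨmeas, hPint⟩, ⟨hΨmeas, ?_⟩⟩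
  intro H hH
  rw [hQint H hH, ← hPint H hH, (hb H hH).1]
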